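/- Let θ : F(T) → ℝ be completely alternating with θ(∅) = 0. For nonempty finite M ⊆ T and nonempty L = {t₁,…,t_l} ⊆ M define τ^M_L := Σ_{I ⊆ L} (−1)^{|I|+1} θ((M∖L) ∪ I). Then: (a) τ^M_L ≥ 0; (b) τ^{M∪{t}}_{L∪{t}} = τ^M_L − τ^{M∪{t}}_L for t ∈ T∖M; (c) Σ_{∅≠L⊆A} τ^A_L = θ(A) for every nonempty finite A ⊆ T. -/

import Mathlib

open Finset

/-- `θ` is completely alternating on `(Finset T, ∪, ∅)`. -/
def CompAlt {T : Type*} [DecidableEq T] (ψ : Finset T → ℝ) : Prop :=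
  ∀ n : ℕ, 1 ≤ n → ∀ (K : Finset T) (Ks : Fin n → Finset T),
    ∑ I ∈ (Finset.univ : Finset (Fin n)).powerset,
      (-1 : ℝ) ^ I.card * ψ (K ∪ I.sup Ks) ≤ 0

theorem tau_aux_powerset_image {T : Type*} [DecidableEq T] {n : ℕ} (f : Fin n → T)
    (_hf : Function.Injective f) (L : Finset T) (hL : Finset.image f Finset.univ = L) :
    (Finset.univ : Finset (Fin n)).powerset.image (fun I => I.image f) = L.powerset := by
  ext J
  simp only [Finset.mem_image, Finset.mem_powerset]
  constructor
  · rintro ⟨I, -, rfl⟩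
    rw [← hL]
    exact Finset.image_subset_image (Finset.subset_univ I)
  · intro hJ
    rw [← hL] at hJ
    obtain ⟨I, hI, hI'⟩ := Finset.subset_image_iff.mp hJ
    exact ⟨I, Finset.subset_univ I, hI'⟩

/-- For a completely alternating `θ` with `θ(∅) = 0`, the coefficients
`τ^M_L = ∑_{I⊆L} (-1)^{|I|+1} θ((M∖L) ∪ I)` are nonnegative, satisfy the
consistency relation `τ^{M∪{t}}_{L∪{t}} = τ^M_L - τ^{M∪{t}}_L`, and
`∑_{∅≠L⊆A} τ^A_L = θ(A)`. -/
theorem tau_of_compAlt {T : Type*} [DecidableEq T] (θ : Finset T → ℝ)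
    (hCA : CompAlt θ) (h0 : θ ∅ = 0)
    (τ : Finset T → Finset T → ℝ)
    (hτ : ∀ M L : Finset T, τ M L =
      ∑ I ∈ L.powerset, (-1 : ℝ) ^ (I.card + 1) * θ ((M \ L) ∪ I)) :
    (∀ M L : Finset T, L.Nonempty → L ⊆ M → 0 ≤ τ M L) ∧
    (∀ (M L : Finset T) (t : T), L.Nonempty → L ⊆ M → t ∉ M →
      τ (insert t M) (insert t L) = τ M L - τ (insert t M) L) ∧
    (∀ A : Finset T, A.Nonempty →
      ∑ L ∈ A.powerset.filter Finset.Nonempty, τ A L = θ A) := by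
  -- Part (a)
  have parta : ∀ M L : Finset T, L.Nonempty → L ⊆ M → 0 ≤ τ M L := by
    intro M L hLne hLM
    set n := L.card with hn
    have hn1 : 1 ≤ n := Finset.card_pos.mpr hLne
    let e := L.equivFin
    let f : Fin n → T := fun i => (e.symm i : T)
    have hfinj : Function.Injective f := by
      intro a b hab
      exact e.symm.injective (Subtype.val_injective hab)
    have himg : Finset.image f Finset.univ = L := by
      have : Finset.image f Finset.univ
          = Finset.image Subtype.val (Finset.image e.symm Finset.univ) := by
        rw [Finset.image_image]; rfl
      rw [this, Finset.image_univ_equiv, Finset.univ_eq_attach, Finset.attach_image_val]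
    have hCA' := hCA n hn1 (M \ L) (fun i => {f i})
    have hsum : ∑ I ∈ (Finset.univ : Finset (Fin n)).powerset,
        (-1 : ℝ) ^ I.card * θ ((M \ L) ∪ I.sup (fun i => {f i}))
        = ∑ J ∈ L.powerset, (-1 : ℝ) ^ J.card * θ ((M \ L) ∪ J) := by
      rw [← tau_aux_powerset_image f hfinj L himg, Finset.sum_image]
      · apply Finset.sum_congr rfl
        intro I _
        rw [Finset.sup_singleton_apply I f, Finset.card_image_of_injective I hfinj]
      · intro a _ b _ hab
        exact Finset.image_injective hfinj hab
    have key : τ M L = - ∑ J ∈ L.powerset, (-1 : ℝ) ^ J.card * θ ((M \ L) ∪ J) := by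
      rw [hτ, ← Finset.sum_neg_distrib]
      apply Finset.sum_congr rfl
      intro J _
      ring
    rw [key]
    rw [hsum] at hCA'
    linarith
  -- Part (b), for all L ⊆ M (no nonemptiness needed)
  have partb : ∀ (M L : Finset T) (t : T), L ⊆ M → t ∉ M →
      τ (insert t M) (insert t L) = τ M L - τ (insert t M) L := by
    intro M L t hLM htM
    have htL : t ∉ L := fun h => htM (hLM h)
    have h1 : insert t M \ insert t L = M \ L := by
      ext x
      simp only [Finset.mem_sdiff, Finset.mem_insert]
      constructor
      · rintro ⟨h, h'⟩
        exact ⟨h.resolve_left (fun ht => h' (Or.inl ht)), fun hx => h' (Or.inr hx)⟩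
      · rintro ⟨hM, hL⟩
        refine ⟨Or.inr hM, ?_⟩
        rintro (rfl | hx)
        · exact htM hM
        · exact hL hx
    have h2 : insert t M \ L = insert t (M \ L) := by
      ext x
      simp only [Finset.mem_sdiff, Finset.mem_insert]
      constructor
      · rintro ⟨h | h, h'⟩
        · left; exact h
        · right; exact ⟨h, h'⟩
      · rintro (rfl | ⟨h, h'⟩)
        · exact ⟨Or.inl rfl, fun hc => htL hc⟩
        · exact ⟨Or.inr h, h'⟩
    rw [hτ (insert t M) (insert t L), hτ M L, hτ (insert t M) L,
      Finset.sum_powerset_insert htL, h1, h2]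
    have : ∀ I ∈ L.powerset, (-1 : ℝ) ^ ((insert t I).card + 1) * θ (M \ L ∪ insert t I)
        = - ((-1 : ℝ) ^ (I.card + 1) * θ (insert t (M \ L) ∪ I)) := by
      intro I hI
      have htI : t ∉ I := fun h => htL (Finset.mem_powerset.mp hI h)
      rw [Finset.card_insert_of_notMem htI, Finset.union_insert, Finset.insert_union]
      ring
    rw [Finset.sum_congr rfl this, Finset.sum_neg_distrib]
    ring
  -- Part (c)
  have total : ∀ A : Finset T, ∑ L ∈ A.powerset, τ A L = 0 := by
    intro A
    induction A using Finset.induction_on with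
    | empty =>
      simp [hτ, h0]
    | @insert t s hts ih =>
      rw [Finset.sum_powerset_insert hts]
      have : ∀ L ∈ s.powerset, τ (insert t s) (insert t L)
          = τ s L - τ (insert t s) L := by
        intro L hL
        exact partb s L t (Finset.mem_powerset.mp hL) hts
      rw [Finset.sum_congr rfl this, Finset.sum_sub_distrib]
      rw [ih]
      ring
  refine ⟨parta, fun M L t _ hLM => partb M L t hLM, ?_⟩
  intro A hA
  have hsplit := Finset.sum_filter_add_sum_filter_not A.powerset Finset.Nonempty (τ A)
  have hne : A.powerset.filter (fun L => ¬ L.Nonempty) = {∅} := by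
    ext L
    simp [Finset.not_nonempty_iff_eq_empty]
    rintro rfl
    exact Finset.empty_subset A
  have hempty : τ A ∅ = - θ A := by
    rw [hτ]
    simp
  rw [hne, Finset.sum_singleton, hempty, total A] at hsplit
  linarith
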